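/- Let G be a group, H ≤ G of finite index, A a G-module, with fixed coset representatives for G/H. The transfer on cochains commutes with the differential: for every n-cochain σ : Hⁿ → A, tr_H^G(∂ⁿ_H σ) = ∂ⁿ_G(tr_H^G σ). -/
import Mathlib


variable {G A : Type*}

/-- The `i`-th face map used in the group cohomology differential: merge
entries `i` and `i+1` of `g` by multiplication. -/
def coface [Group G] {n : ℕ} (i : Fin n) (g : Fin (n + 1) → G) : Fin n → G :=
  fun j => if (j : ℕ) < (i : ℕ) then g j.castSucc
           else if j = i then g i.castSucc * g i.succ
           else g j.succ

/-- The standard inhomogeneous group cohomology differential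
`∂ⁿ : Cⁿ(G,A) → Cⁿ⁺¹(G,A)`. -/
def diff [Group G] [AddCommGroup A] [DistribMulAction G A] (n : ℕ)
    (σ : (Fin n → G) → A) : (Fin (n + 1) → G) → A :=
  fun g => g 0 • σ (fun j => g j.succ)
    + ∑ i : Fin n, ((-1 : ℤ) ^ ((i : ℕ) + 1)) • σ (coface i g)
    + ((-1 : ℤ) ^ (n + 1)) • σ (fun j => g j.castSucc)

/-- Staic's action of the transposition `(p+1, p+2)` (1-indexed) on `n`-cochains. -/
def swapAct [Group G] [AddCommGroup A] [DistribMulAction G A] {n : ℕ} (p : Fin n)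
    (σ : (Fin n → G) → A) : (Fin n → G) → A :=
  fun g =>
    if (p : ℕ) = 0 then
      -(g p • σ (fun j => if (j : ℕ) = 0 then (g j)⁻¹
                          else if (j : ℕ) = 1 then g p * g j else g j))
    else
      -σ (fun j => if (j : ℕ) + 1 = (p : ℕ) then g j * g p
                   else if j = p then (g j)⁻¹
                   else if (j : ℕ) = (p : ℕ) + 1 then g p * g j else g j)

/-- A symmetric `n`-cochain: one invariant under Staic's `Σ_{n+1}`-action,
i.e. fixed by each generating transposition. -/
def IsSymmCochain [Group G] [AddCommGroup A] [DistribMulAction G A] {n : ℕ}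
    (σ : (Fin n → G) → A) : Prop :=
  ∀ (p : Fin n) (g : Fin n → G), σ g = swapAct p σ g

/-- A normalized cochain: vanishes whenever some argument is `1`. -/
def IsNormalized [Group G] [AddCommGroup A] {n : ℕ} (σ : (Fin n → G) → A) : Prop :=
  ∀ g : Fin n → G, (∃ i, g i = 1) → σ g = 0

/-- The `(∗)` conditions: `σ` vanishes whenever two consecutive arguments are
mutually inverse. -/
def SatisfiesStar [Group G] [AddCommGroup A] {n : ℕ} (σ : (Fin n → G) → A) : Prop :=
  ∀ (p : ℕ) (hp : p + 1 < n) (g : Fin n → G),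
    g ⟨p + 1, hp⟩ = (g ⟨p, Nat.lt_of_succ_lt hp⟩)⁻¹ → σ g = 0

def prodFrom {G : Type*} [Group G] {n : ℕ} (g : Fin n → G) (i : ℕ) : G :=
  ((List.ofFn g).drop i).prod

theorem prodFrom_succ {G : Type*} [Group G] {n : ℕ} (g : Fin n → G) (i : ℕ)
    (h : i < n) : prodFrom g i = g ⟨i, h⟩ * prodFrom g (i + 1) := by
  unfold prodFrom
  rw [List.drop_eq_getElem_cons (by simpa using h), List.prod_cons]
  simp

def transferCochain {G A : Type*} [Group G] [AddCommGroup A] [DistribMulAction G A]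
    (H : Subgroup G) [Fintype (G ⧸ H)] (rep : G ⧸ H → G)
    (hrep : ∀ c : G ⧸ H, (QuotientGroup.mk (rep c) : G ⧸ H) = c)
    {n : ℕ} (σ : (Fin n → H) → A) : (Fin n → G) → A :=
  fun g => ∑ c : G ⧸ H,
    rep (prodFrom g 0 • c) •
      σ (fun i =>
        ⟨(rep (prodFrom g (i : ℕ) • c))⁻¹ * g i * rep (prodFrom g ((i : ℕ) + 1) • c), by
          have h1 : (QuotientGroup.mk (rep (prodFrom g (i : ℕ) • c)) : G ⧸ H)
              = prodFrom g (i : ℕ) • c := hrep _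
          have h2 : (QuotientGroup.mk (g i * rep (prodFrom g ((i : ℕ) + 1) • c)) : G ⧸ H)
              = prodFrom g (i : ℕ) • c := by
            calc (QuotientGroup.mk (g i * rep (prodFrom g ((i : ℕ) + 1) • c)) : G ⧸ H)
                = g i • (QuotientGroup.mk (rep (prodFrom g ((i : ℕ) + 1) • c))) := rfl
              _ = g i • (prodFrom g ((i : ℕ) + 1) • c) := by rw [hrep _]
              _ = prodFrom g (i : ℕ) • c := by
                  rw [← mul_smul, ← prodFrom_succ g (i : ℕ) i.isLt]
          have h3 := QuotientGroup.eq.mp (h1.trans h2.symm)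
          simpa [mul_assoc] using h3⟩)


theorem prodFrom_of_le {G : Type*} [Group G] {n : ℕ} (g : Fin n → G) {j : ℕ}
    (h : n ≤ j) : prodFrom g j = 1 := by
  unfold prodFrom
  rw [List.drop_eq_nil_of_le (by simpa using h)]
  rfl

theorem prodFrom_tail {G : Type*} [Group G] {n : ℕ} (g : Fin (n + 1) → G) (j : ℕ) :
    prodFrom (fun k : Fin n => g k.succ) j = prodFrom g (j + 1) := by
  unfold prodFrom
  rw [List.ofFn_succ, List.drop_succ_cons]

theorem prodFrom_init {G : Type*} [Group G] {n : ℕ} (g : Fin (n + 1) → G) (j : ℕ)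
    (hj : j ≤ n) :
    prodFrom (fun k : Fin n => g k.castSucc) j * g (Fin.last n) = prodFrom g j := by
  unfold prodFrom
  rw [List.ofFn_succ', List.concat_eq_append, List.drop_append_of_le_length (by simpa using hj),
    List.prod_append, List.prod_singleton]

theorem prodFrom_coface {G : Type*} [Group G] {n : ℕ} (g : Fin (n + 1) → G) (i : Fin n)
    (j : ℕ) :
    prodFrom (coface i g) j = if j ≤ (i : ℕ) then prodFrom g j else prodFrom g (j + 1) := by
  have key : ∀ k j, n ≤ j + k →
      prodFrom (coface i g) j = if j ≤ (i : ℕ) then prodFrom g j else prodFrom g (j + 1) := by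
    intro k
    induction k with
    | zero =>
      intro j hj
      simp only [Nat.add_zero] at hj
      rw [if_neg (by omega), prodFrom_of_le _ hj, prodFrom_of_le _ (by omega)]
    | succ k ih =>
      intro j hj
      rcases Nat.lt_or_ge j n with hjn | hjn
      · have hih := ih (j + 1) (by omega)
        rw [prodFrom_succ (coface i g) j hjn]
        rcases Nat.lt_trichotomy j (i : ℕ) with h1 | h1 | h1
        · rw [if_pos (show j + 1 ≤ (i : ℕ) by omega)] at hih
          rw [hih, if_pos (show j ≤ (i : ℕ) by omega), prodFrom_succ g j (by omega)]
          congr 1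
          simp [coface, h1]
        · rw [if_neg (show ¬ j + 1 ≤ (i : ℕ) by omega)] at hih
          rw [hih, if_pos (show j ≤ (i : ℕ) by omega), prodFrom_succ g j (by omega),
            prodFrom_succ g (j + 1) (by omega), ← mul_assoc]
          congr 1
          subst h1
          simp [coface, Fin.ext_iff, Fin.castSucc, Fin.succ, Fin.castAdd, Fin.castLE]
        · rw [if_neg (show ¬ j + 1 ≤ (i : ℕ) by omega)] at hih
          rw [hih, if_neg (show ¬ j ≤ (i : ℕ) by omega), prodFrom_succ g (j + 1) (by omega)]
          congr 1
          simp only [coface]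
          rw [if_neg (by omega), if_neg (by simp [Fin.ext_iff]; omega)]
          simp
      · rw [if_neg (by omega), prodFrom_of_le _ hjn, prodFrom_of_le _ (by omega)]
  exact key (n - j + 1) j (by omega)

theorem subgroup_mk_smul {G A : Type*} [Group G] [AddCommGroup A] [DistribMulAction G A]
    {H : Subgroup G} (v : G) (hv : v ∈ H) (a : A) : (⟨v, hv⟩ : H) • a = v • a := rfl

/-- The transfer on cochains commutes with the differential: for a finite-index
subgroup `H ≤ G` with chosen coset representatives (`H̄ = 1`) and every
`n`-cochain `σ : Hⁿ → A`, one has `tr_H^G(∂ⁿ_H σ) = ∂ⁿ_G(tr_H^G σ)`. -/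
theorem transferCochain_diff [Group G] [AddCommGroup A] [DistribMulAction G A]
    (H : Subgroup G) [Fintype (G ⧸ H)] (rep : G ⧸ H → G)
    (hrep : ∀ c : G ⧸ H, (QuotientGroup.mk (rep c) : G ⧸ H) = c)
    (hrep1 : rep (QuotientGroup.mk 1) = 1)
    {n : ℕ} (σ : (Fin n → H) → A) :
    transferCochain H rep hrep (diff n σ) = diff n (transferCochain H rep hrep σ) := by
  funext g
  simp only [transferCochain, diff, smul_add, Finset.sum_add_distrib]
  congr 1
  · congr 1
    · -- first term
      rw [Finset.smul_sum]
      refine Finset.sum_congr rfl fun c _ => ?_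
      rw [subgroup_mk_smul, ← mul_smul, ← mul_smul]
      congr 1
      · rw [prodFrom_tail g 0]
        simp [mul_assoc]
      · congr 1
        funext j
        apply Subtype.ext
        simp [prodFrom_tail, Fin.val_succ]
    · -- middle terms
      simp only [Finset.smul_sum]
      rw [Finset.sum_comm]
      refine Finset.sum_congr rfl fun i _ => ?_
      refine Finset.sum_congr rfl fun c _ => ?_
      rw [smul_comm]
      congr 1
      have h0 : prodFrom (coface i g) 0 = prodFrom g 0 := by
        rw [prodFrom_coface, if_pos (Nat.zero_le _)]
      rw [h0]
      refine congrArg (rep (prodFrom g 0 • c) • ·) (congrArg σ (funext fun j => ?_))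
      apply Subtype.ext
      rcases Nat.lt_trichotomy (j : ℕ) (i : ℕ) with h1 | h1 | h1
      · have e1 : prodFrom (coface i g) (j : ℕ) = prodFrom g (j : ℕ) := by
          rw [prodFrom_coface, if_pos (by omega)]
        have e2 : prodFrom (coface i g) ((j : ℕ) + 1) = prodFrom g ((j : ℕ) + 1) := by
          rw [prodFrom_coface, if_pos (by omega)]
        simp only [coface, if_pos h1, e1, e2]
        simp [Fin.coe_castSucc]
      · have hji : j = i := Fin.ext h1
        subst hji
        have e1 : prodFrom (coface j g) (j : ℕ) = prodFrom g (j : ℕ) := by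
          rw [prodFrom_coface, if_pos le_rfl]
        have e2 : prodFrom (coface j g) ((j : ℕ) + 1) = prodFrom g ((j : ℕ) + 2) := by
          rw [prodFrom_coface, if_neg (by omega)]
        simp only [coface, lt_irrefl, if_false, eq_self_iff_true, if_true, e1, e2,
          MulMemClass.coe_mul, Fin.coe_castSucc, Fin.val_succ]
        group
      · have e1 : prodFrom (coface i g) (j : ℕ) = prodFrom g ((j : ℕ) + 1) := by
          rw [prodFrom_coface, if_neg (by omega)]
        have e2 : prodFrom (coface i g) ((j : ℕ) + 1) = prodFrom g ((j : ℕ) + 2) := by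
          rw [prodFrom_coface, if_neg (by omega)]
        simp only [coface, if_neg (show ¬ (j : ℕ) < (i : ℕ) by omega),
          if_neg (show ¬ j = i by simp [Fin.ext_iff]; omega), e1, e2]
        simp [Fin.val_succ]
  · -- last term
    rw [Finset.smul_sum]
    refine Fintype.sum_equiv (MulAction.toPerm (g (Fin.last n))) _ _ fun c => ?_
    have ee : ∀ j, j ≤ n →
        prodFrom (fun k : Fin n => g k.castSucc) j • (g (Fin.last n)) • c = prodFrom g j • c := by
      intro j hj
      rw [← mul_smul, prodFrom_init g j hj]
    rw [smul_comm]
    congr 1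
    simp only [MulAction.toPerm_apply]
    rw [ee 0 (Nat.zero_le n)]
    refine congrArg (rep (prodFrom g 0 • c) • ·) (congrArg σ (funext fun j => ?_))
    apply Subtype.ext
    have e1 := ee (j : ℕ) (le_of_lt j.isLt)
    have e2 := ee ((j : ℕ) + 1) j.isLt
    simp only [e1, e2, Fin.coe_castSucc]
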